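/- If k = 8b², then the cubic integral J4 (as above) Poisson-commutes with J2 = p1 + p2 + p3: {J2, J4} = 0. -/
import Mathlib


open scoped BigOperators

/-- Partial derivative of a function on phase space ℝ⁶ in the i-th coordinate. -/
noncomputable def pd (i : Fin 6) (f : (Fin 6 → ℝ) → ℝ) (x : Fin 6 → ℝ) : ℝ :=
  fderiv ℝ f x (Pi.single i 1)

/-- Canonical Poisson bracket on ℝ⁶ with coordinates (q1,q2,q3,p1,p2,p3). -/
noncomputable def pb (F G : (Fin 6 → ℝ) → ℝ) (x : Fin 6 → ℝ) : ℝ :=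
  (pd 0 F x * pd 3 G x - pd 3 F x * pd 0 G x) +
  (pd 1 F x * pd 4 G x - pd 4 F x * pd 1 G x) +
  (pd 2 F x * pd 5 G x - pd 5 F x * pd 2 G x)

/-- Angular momentum components: L1 = q2 p3 − q3 p2, etc. -/
def L1 (x : Fin 6 → ℝ) : ℝ := x 1 * x 5 - x 2 * x 4
def L2 (x : Fin 6 → ℝ) : ℝ := x 2 * x 3 - x 0 * x 5
def L3 (x : Fin 6 → ℝ) : ℝ := x 0 * x 4 - x 1 * x 3

/-- The Hamiltonian of the coupled oscillators with magnetic terms. -/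
noncomputable def Ham (b k : ℝ) (x : Fin 6 → ℝ) : ℝ :=
  (1/2) * (x 3 ^ 2 + x 4 ^ 2 + x 5 ^ 2) + b * (L1 x + L2 x + L3 x) +
  (1/2) * (b ^ 2 + k) * ((x 1 - x 0) ^ 2 + (x 2 - x 1) ^ 2 + (x 0 - x 2) ^ 2)

/-- J2 = p1 + p2 + p3. -/
def J2 (x : Fin 6 → ℝ) : ℝ := x 3 + x 4 + x 5

/-- J3 = L1 + L2 + L3. -/
def J3 (x : Fin 6 → ℝ) : ℝ := L1 x + L2 x + L3 x

/-- z1 = 4(q21² + q13²) + q32², and cyclic. -/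
def z1 (x : Fin 6 → ℝ) : ℝ := 4 * ((x 1 - x 0)^2 + (x 0 - x 2)^2) + (x 2 - x 1)^2
def z2 (x : Fin 6 → ℝ) : ℝ := 4 * ((x 2 - x 1)^2 + (x 1 - x 0)^2) + (x 0 - x 2)^2
def z3 (x : Fin 6 → ℝ) : ℝ := 4 * ((x 0 - x 2)^2 + (x 2 - x 1)^2) + (x 1 - x 0)^2

/-- The cubic function J4. -/
noncomputable def J4c (b : ℝ) (x : Fin 6 → ℝ) : ℝ :=
  (1/3) * (x 3 ^ 3 + x 4 ^ 3 + x 5 ^ 3)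
  - b * ((x 2 - x 1) * x 3 ^ 2 + (x 0 - x 2) * x 4 ^ 2 + (x 1 - x 0) * x 5 ^ 2)
  + b^2 * (z1 x * x 3 + z2 x * x 4 + z3 x * x 5)
  + 9 * b^3 * ((x 1 - x 0)^3 + (x 0 - x 2)^3 + (x 2 - x 1)^3)

section stmt17aux

lemma hJ2fd' (x : Fin 6 → ℝ) :
    HasFDerivAt J2 ((ContinuousLinearMap.proj 3 : (Fin 6 → ℝ) →L[ℝ] ℝ)
      + ContinuousLinearMap.proj 4 + ContinuousLinearMap.proj 5) x := by
  have h3 := (ContinuousLinearMap.proj 3 : (Fin 6 → ℝ) →L[ℝ] ℝ).hasFDerivAt (x := x)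
  have h4 := (ContinuousLinearMap.proj 4 : (Fin 6 → ℝ) →L[ℝ] ℝ).hasFDerivAt (x := x)
  have h5 := (ContinuousLinearMap.proj 5 : (Fin 6 → ℝ) →L[ℝ] ℝ).hasFDerivAt (x := x)
  exact (h3.add h4).add h5

lemma pdJ2' (i : Fin 6) (x : Fin 6 → ℝ) :
    pd i J2 x = (Pi.single i (1:ℝ) : Fin 6 → ℝ) 3 + (Pi.single i (1:ℝ) : Fin 6 → ℝ) 4
      + (Pi.single i (1:ℝ) : Fin 6 → ℝ) 5 := by
  unfold pd
  rw [(hJ2fd' x).fderiv]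
  simp [ContinuousLinearMap.proj]

lemma hdiffJ4 (b : ℝ) (x : Fin 6 → ℝ) : DifferentiableAt ℝ (J4c b) x := by
  unfold J4c z1 z2 z3
  fun_prop

noncomputable def uvec : Fin 6 → ℝ := Pi.single 0 1 + Pi.single 1 1 + Pi.single 2 1

lemma hconstJ4 (b : ℝ) (x : Fin 6 → ℝ) (t : ℝ) : J4c b (x + t • uvec) = J4c b x := by
  have h0 : (x + t • uvec) 0 = x 0 + t := by simp [uvec, Pi.single_apply]
  have h1 : (x + t • uvec) 1 = x 1 + t := by simp [uvec, Pi.single_apply]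
  have h2 : (x + t • uvec) 2 = x 2 + t := by simp [uvec, Pi.single_apply]
  have h3 : (x + t • uvec) 3 = x 3 := by simp [uvec, Pi.single_apply]
  have h4 : (x + t • uvec) 4 = x 4 := by simp [uvec, Pi.single_apply]
  have h5 : (x + t • uvec) 5 = x 5 := by simp [uvec, Pi.single_apply]
  unfold J4c z1 z2 z3
  rw [h0, h1, h2, h3, h4, h5]
  ring

lemma hdirzeroJ4 (b : ℝ) (x : Fin 6 → ℝ) : fderiv ℝ (J4c b) x uvec = 0 := by
  have hline : HasDerivAt (fun t : ℝ => x + t • uvec) uvec 0 := by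
    simpa using ((hasDerivAt_id (0:ℝ)).smul_const uvec).const_add x
  have hx0 : x + (0:ℝ) • uvec = x := by simp
  have hcomp : HasDerivAt (fun t : ℝ => J4c b (x + t • uvec)) (fderiv ℝ (J4c b) x uvec) 0 := by
    have hf : HasFDerivAt (J4c b) (fderiv ℝ (J4c b) x) (x + (0:ℝ) • uvec) := by
      rw [hx0]; exact (hdiffJ4 b x).hasFDerivAt
    exact hf.comp_hasDerivAt 0 hline
  have heq : (fun t : ℝ => J4c b (x + t • uvec)) = fun _ => J4c b x := funext (hconstJ4 b x)
  rw [heq] at hcomp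
  have := hcomp.deriv
  simpa [deriv_const] using this.symm

end stmt17aux

/-- If k = 8b², the cubic J4 Poisson-commutes with J2: {J2, J4} = 0. -/
theorem stmt17 (b k : ℝ) (hk : k = 8 * b^2) (x : Fin 6 → ℝ) :
    pb J2 (J4c b) x = 0 := by
  have h0 : pd 0 J2 x = 0 := by rw [pdJ2']; simp [Pi.single_apply]
  have h1 : pd 1 J2 x = 0 := by rw [pdJ2']; simp [Pi.single_apply]
  have h2 : pd 2 J2 x = 0 := by rw [pdJ2']; simp [Pi.single_apply]
  have h3 : pd 3 J2 x = 1 := by rw [pdJ2']; simp [Pi.single_apply]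
  have h4 : pd 4 J2 x = 1 := by rw [pdJ2']; simp [Pi.single_apply]
  have h5 : pd 5 J2 x = 1 := by rw [pdJ2']; simp [Pi.single_apply]
  have hsum : pd 0 (J4c b) x + pd 1 (J4c b) x + pd 2 (J4c b) x = 0 := by
    have hu : uvec = (Pi.single 0 1 : Fin 6 → ℝ) + Pi.single 1 1 + Pi.single 2 1 := rfl
    have := hdirzeroJ4 b x
    rw [hu, map_add, map_add] at this
    simpa [pd] using this
  unfold pb
  rw [h0, h1, h2, h3, h4, h5]
  linarith [hsum]
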